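/- Let X and Y be real Banach spaces and Δ : S(X) → S(Y) a surjective isometry between the unit spheres. Then for any x ∈ S(X), the image Δ(−x) has norm 1, and Δ maps each maximal proper norm-closed face of the unit ball of X contained in S(X) onto an intersection of maximal faces of the unit ball of Y; in particular, if F ⊆ S(X) is a maximal convex subset of S(X), then Δ(F) is a maximal convex subset of S(Y). -/

import Mathlib

open Set Pointwise

namespace Stmt9Aux

variable {E : Type*} [NormedAddCommGroup E] [NormedSpace ℝ E]

/-- The set of points of the unit sphere which are at distance `2` from every point of `A`. -/
def pol (A : Set E) : Set E := {z : E | ‖z‖ = 1 ∧ ∀ a ∈ A, ‖z - a‖ = 2}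

lemma pol_anti {A B : Set E} (h : A ⊆ B) : pol B ⊆ pol A :=
  fun _ hz => ⟨hz.1, fun a ha => hz.2 a (h ha)⟩

/-- If `‖p + q‖ = 2` for two unit vectors, the segment between them lies on the sphere. -/
lemma flat_segment {p q : E} (hp : ‖p‖ = 1) (hq : ‖q‖ = 1) (hpq : ‖p + q‖ = 2)
    {a b : ℝ} (ha : 0 ≤ a) (hb : 0 ≤ b) (hab : a + b = 1) :
    ‖a • p + b • q‖ = 1 := by
  have hne : p + q ≠ 0 := by
    intro h
    rw [h, norm_zero] at hpq
    norm_num at hpq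
  obtain ⟨f, hf1, hf2⟩ := exists_dual_vector ℝ (p + q) (norm_ne_zero_iff.mpr hne)
  have hf2' : f (p + q) = 2 := by rw [hf2, hpq]; norm_cast
  have hfp : f p ≤ 1 := by
    have h1 := f.le_opNorm p
    rw [hf1, one_mul, hp] at h1
    calc f p ≤ |f p| := le_abs_self _
    _ = ‖f p‖ := (Real.norm_eq_abs _).symm
    _ ≤ 1 := h1
  have hfq : f q ≤ 1 := by
    have h1 := f.le_opNorm q
    rw [hf1, one_mul, hq] at h1
    calc f q ≤ |f q| := le_abs_self _
    _ = ‖f q‖ := (Real.norm_eq_abs _).symm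
    _ ≤ 1 := h1
  have hsum : f p + f q = 2 := by rw [← map_add]; exact hf2'
  have hfp1 : f p = 1 := by linarith
  have hfq1 : f q = 1 := by linarith
  have hval : f (a • p + b • q) = 1 := by
    rw [map_add, map_smul, map_smul, hfp1, hfq1, smul_eq_mul, smul_eq_mul]
    simpa using hab
  have hlow : (1 : ℝ) ≤ ‖a • p + b • q‖ := by
    have h1 := f.le_opNorm (a • p + b • q)
    rw [hf1, one_mul] at h1
    calc (1 : ℝ) = f (a • p + b • q) := hval.symm
    _ ≤ |f (a • p + b • q)| := le_abs_self _
    _ = ‖f (a • p + b • q)‖ := (Real.norm_eq_abs _).symm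
    _ ≤ ‖a • p + b • q‖ := h1
  have hhigh : ‖a • p + b • q‖ ≤ 1 := by
    calc ‖a • p + b • q‖ ≤ ‖a • p‖ + ‖b • q‖ := norm_add_le _ _
    _ = a * 1 + b * 1 := by
        rw [norm_smul, norm_smul, hp, hq, Real.norm_eq_abs, Real.norm_eq_abs,
          abs_of_nonneg ha, abs_of_nonneg hb]
    _ = 1 := by linarith
  linarith

/-- Every convex subset of the sphere is contained in a maximal convex subset. -/
lemma exists_maximal_convex {A : Set E} (hAs : A ⊆ {x : E | ‖x‖ = 1}) (hAc : Convex ℝ A) :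
    ∃ M : Set E, A ⊆ M ∧ M ⊆ {x : E | ‖x‖ = 1} ∧ Convex ℝ M ∧
      ∀ B : Set E, B ⊆ {x : E | ‖x‖ = 1} → Convex ℝ B → M ⊆ B → M = B := by
  have h := zorn_subset_nonempty {B : Set E | B ⊆ {x : E | ‖x‖ = 1} ∧ Convex ℝ B} ?_ A ⟨hAs, hAc⟩
  · obtain ⟨M, hAM, hM⟩ := h
    exact ⟨M, hAM, hM.prop.1, hM.prop.2,
      fun B hBs hBc hMB => hM.eq_of_subset ⟨hBs, hBc⟩ hMB⟩
  · intro c hcS hchain _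
    refine ⟨⋃₀ c, ⟨?_, ?_⟩, fun s hs => subset_sUnion_of_mem hs⟩
    · rintro z ⟨s, hs, hzs⟩
      exact (hcS hs).1 hzs
    · intro x hx y hy a b ha hb hab
      obtain ⟨s, hs, hxs⟩ := hx
      obtain ⟨u, hu, hyu⟩ := hy
      obtain ⟨v, hv, hsv, huv⟩ := hchain.directedOn s hs u hu
      exact subset_sUnion_of_mem hv ((hcS hv).2 (hsv hxs) (huv hyu) ha hb hab)

/-- A point flat with every point of a maximal convex set belongs to it. -/
lemma mem_of_forall_flat {M : Set E} (hMs : M ⊆ {x : E | ‖x‖ = 1}) (hMc : Convex ℝ M)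
    (hmax : ∀ B : Set E, B ⊆ {x : E | ‖x‖ = 1} → Convex ℝ B → M ⊆ B → M = B)
    {z : E} (hz : ‖z‖ = 1) (hflat : ∀ d ∈ M, ‖z + d‖ = 2) : z ∈ M := by
  rcases M.eq_empty_or_nonempty with h | h
  · have hMz : M = {z} := by
      apply hmax {z} _ (convex_singleton z)
      · rw [h]; exact empty_subset _
      · intro w hw
        rcases hw with rfl
        exact hz
    rw [hMz]; exact mem_singleton z
  · set Eh := convexHull ℝ (insert z M) with hEh
    have hEsub : Eh ⊆ {x : E | ‖x‖ = 1} := by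
      rw [hEh, insert_eq, convexHull_union (singleton_nonempty z) h, convexHull_singleton,
        hMc.convexHull_eq]
      intro w hw
      rw [mem_convexJoin] at hw
      obtain ⟨p, hp, d, hd, hw⟩ := hw
      rcases hp with rfl
      obtain ⟨a, b, ha, hb, hab, rfl⟩ := hw
      exact flat_segment hz (hMs hd) (hflat d hd) ha hb hab
    have hME : M ⊆ Eh := (subset_insert z M).trans (subset_convexHull ℝ _)
    have := hmax Eh hEsub (convex_convexHull ℝ _) hME
    rw [this]
    exact subset_convexHull ℝ _ (mem_insert z M)

lemma neg_subset_sphere {M : Set E} (hMs : M ⊆ {x : E | ‖x‖ = 1}) :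
    -M ⊆ {x : E | ‖x‖ = 1} := by
  intro z hz
  have := hMs (Set.mem_neg.1 hz)
  simpa using this

/-- The negative of a maximal convex subset of the sphere is maximal convex. -/
lemma max_neg {M : Set E} (hMs : M ⊆ {x : E | ‖x‖ = 1}) (hMc : Convex ℝ M)
    (hmax : ∀ B : Set E, B ⊆ {x : E | ‖x‖ = 1} → Convex ℝ B → M ⊆ B → M = B) :
    ∀ B : Set E, B ⊆ {x : E | ‖x‖ = 1} → Convex ℝ B → -M ⊆ B → -M = B := by
  intro B hBs hBc hMB
  have h1 : M ⊆ -B := by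
    intro m hm
    rw [Set.mem_neg]
    exact hMB (by rwa [Set.mem_neg, neg_neg])
  have h2 := hmax (-B) (neg_subset_sphere hBs) hBc.neg h1
  rw [h2, neg_neg]

/-- For a maximal convex subset `M` of the sphere, `pol M = -M`. -/
lemma pol_eq_neg_of_max {M : Set E} (hMs : M ⊆ {x : E | ‖x‖ = 1}) (hMc : Convex ℝ M)
    (hmax : ∀ B : Set E, B ⊆ {x : E | ‖x‖ = 1} → Convex ℝ B → M ⊆ B → M = B) :
    pol M = -M := by
  ext z
  constructor
  · rintro ⟨hz1, hz2⟩
    rw [Set.mem_neg]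
    apply mem_of_forall_flat hMs hMc hmax (by simpa using hz1)
    intro d hd
    rw [neg_add_eq_sub, norm_sub_rev]
    exact hz2 d hd
  · intro hz
    have hzM : -z ∈ M := Set.mem_neg.1 hz
    have hz1 : ‖z‖ = 1 := by
      have := hMs hzM
      simpa using this
    refine ⟨hz1, fun d hd => ?_⟩
    have hmid : (1/2 : ℝ) • (-z) + (1/2 : ℝ) • d ∈ M :=
      hMc hzM hd (by norm_num) (by norm_num) (by norm_num)
    have hmidn : ‖(1/2 : ℝ) • (-z) + (1/2 : ℝ) • d‖ = 1 := hMs hmid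
    have : ‖-z + d‖ = 2 := by
      rw [← smul_add] at hmidn
      rw [norm_smul] at hmidn
      simp only [Real.norm_eq_abs] at hmidn
      rw [abs_of_nonneg (by norm_num : (0:ℝ) ≤ 1/2)] at hmidn
      linarith
    rwa [← norm_neg, neg_add, neg_neg, ← sub_eq_add_neg] at this

variable {X Y : Type*} [NormedAddCommGroup X] [NormedSpace ℝ X]
  [NormedAddCommGroup Y] [NormedSpace ℝ Y]

/-- The polar commutes with the spherical isometry. -/
lemma pol_image (Δ : X → Y)
    (hmap : ∀ x : X, ‖x‖ = 1 → ‖Δ x‖ = 1)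
    (hsurj : ∀ y : Y, ‖y‖ = 1 → ∃ x : X, ‖x‖ = 1 ∧ Δ x = y)
    (hiso : ∀ x y : X, ‖x‖ = 1 → ‖y‖ = 1 → ‖Δ x - Δ y‖ = ‖x - y‖)
    {A : Set X} (hA : A ⊆ {x : X | ‖x‖ = 1}) :
    Δ '' pol A = pol (Δ '' A) := by
  ext ζ
  constructor
  · rintro ⟨a, ⟨ha1, ha2⟩, rfl⟩
    refine ⟨hmap a ha1, ?_⟩
    rintro y ⟨a', ha', rfl⟩
    rw [hiso a a' ha1 (hA ha')]
    exact ha2 a' ha'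
  · rintro ⟨hζ1, hζ2⟩
    obtain ⟨q, hq, rfl⟩ := hsurj ζ hζ1
    refine ⟨q, ⟨hq, ?_⟩, rfl⟩
    intro a ha
    have := hζ2 (Δ a) ⟨a, ha, rfl⟩
    rwa [hiso q a hq (hA ha)] at this

/-- Key lemma: convex combinations on the sphere are mapped into the sphere. -/
lemma image_combo_norm (Δ : X → Y)
    (hmap : ∀ x : X, ‖x‖ = 1 → ‖Δ x‖ = 1)
    (hsurj : ∀ y : Y, ‖y‖ = 1 → ∃ x : X, ‖x‖ = 1 ∧ Δ x = y)
    (hiso : ∀ x y : X, ‖x‖ = 1 → ‖y‖ = 1 → ‖Δ x - Δ y‖ = ‖x - y‖)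
    {ι : Type} (s : Finset ι) (t : ι → ℝ) (x : ι → X)
    (ht0 : ∀ i ∈ s, 0 ≤ t i) (ht1 : ∑ i ∈ s, t i = 1)
    (hx : ∀ i ∈ s, ‖x i‖ = 1) (hc : ‖∑ i ∈ s, t i • x i‖ = 1) :
    ‖∑ i ∈ s, t i • Δ (x i)‖ = 1 := by
  set c : X := ∑ i ∈ s, t i • x i with hcdef
  have hΔc : ‖Δ c‖ = 1 := hmap c hc
  obtain ⟨D, hDin, hDs, hDc, hDmax⟩ :=
    exists_maximal_convex (A := ({Δ c} : Set Y))
      (by intro y hy; rcases hy with rfl; exact hΔc) (convex_singleton _)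
  have hΔcD : Δ c ∈ D := hDin (mem_singleton _)
  -- pol (pol D) = D
  have hpolpol : pol (pol D) = D := by
    rw [pol_eq_neg_of_max hDs hDc hDmax,
      pol_eq_neg_of_max (neg_subset_sphere hDs) hDc.neg (max_neg hDs hDc hDmax), neg_neg]
  have key : ∀ i ∈ s, t i ≠ 0 → Δ (x i) ∈ D := by
    intro i hi hti
    rw [← hpolpol]
    refine ⟨hmap _ (hx i hi), ?_⟩
    rintro ζ ⟨hζ1, hζ2⟩
    obtain ⟨q, hq, rfl⟩ := hsurj ζ hζ1
    have hqc : ‖q - c‖ = 2 := by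
      have := hζ2 (Δ c) hΔcD
      rwa [hiso q c hq hc] at this
    have hqx : ‖q - x i‖ = 2 := by
      by_contra hne
      have hle : ∀ j ∈ s, ‖q - x j‖ ≤ 2 := by
        intro j hj
        calc ‖q - x j‖ ≤ ‖q‖ + ‖x j‖ := norm_sub_le _ _
        _ = 2 := by rw [hq, hx j hj]; norm_num
      have hlt : ‖q - x i‖ < 2 := lt_of_le_of_ne (hle i hi) hne
      have hrw : q - c = ∑ j ∈ s, t j • (q - x j) := by
        rw [hcdef]
        rw [Finset.sum_congr rfl (fun j _ => smul_sub (t j) q (x j))]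
        rw [Finset.sum_sub_distrib, ← Finset.sum_smul, ht1, one_smul]
      have hup : ∑ j ∈ s, t j * ‖q - x j‖ < 2 := by
        have hstrict : ∑ j ∈ s, t j * ‖q - x j‖ < ∑ j ∈ s, t j * 2 := by
          apply Finset.sum_lt_sum
          · intro j hj
            exact mul_le_mul_of_nonneg_left (hle j hj) (ht0 j hj)
          · refine ⟨i, hi, ?_⟩
            have hti' : 0 < t i := lt_of_le_of_ne (ht0 i hi) (Ne.symm hti)
            exact mul_lt_mul_of_pos_left hlt hti'
        calc ∑ j ∈ s, t j * ‖q - x j‖ < ∑ j ∈ s, t j * 2 := hstrict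
        _ = 2 := by rw [← Finset.sum_mul, ht1, one_mul]
      have hdown : (2 : ℝ) ≤ ∑ j ∈ s, t j * ‖q - x j‖ := by
        calc (2 : ℝ) = ‖q - c‖ := hqc.symm
        _ = ‖∑ j ∈ s, t j • (q - x j)‖ := by rw [hrw]
        _ ≤ ∑ j ∈ s, ‖t j • (q - x j)‖ := norm_sum_le _ _
        _ = ∑ j ∈ s, t j * ‖q - x j‖ := by
            apply Finset.sum_congr rfl
            intro j hj
            rw [norm_smul, Real.norm_eq_abs, abs_of_nonneg (ht0 j hj)]
      linarith
    -- conclude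
    rw [hiso (x i) q (hx i hi) hq, norm_sub_rev]
    exact hqx
  -- now the convex combination of the images is in D
  set s' := s.filter (fun i => t i ≠ 0) with hs'
  have hsub : s' ⊆ s := Finset.filter_subset _ _
  have hsum1 : ∑ i ∈ s', t i = 1 := by
    rw [hs', Finset.sum_filter_of_ne (fun i _ h => h), ht1]
  have hmem : ∑ i ∈ s', t i • Δ (x i) ∈ D := by
    apply hDc.sum_mem
    · intro i hi; exact ht0 i (hsub hi)
    · exact hsum1
    · intro i hi
      rw [hs', Finset.mem_filter] at hi
      exact key i hi.1 hi.2
  have heq : ∑ i ∈ s, t i • Δ (x i) = ∑ i ∈ s', t i • Δ (x i) := by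
    rw [hs']
    rw [Finset.sum_filter_of_ne]
    intro i _ h ht
    apply h
    rw [ht, zero_smul]
  rw [heq]
  exact hDs hmem

/-- The convex hull of the image of a convex subset of the sphere is in the sphere. -/
lemma hull_image_subset (Δ : X → Y)
    (hmap : ∀ x : X, ‖x‖ = 1 → ‖Δ x‖ = 1)
    (hsurj : ∀ y : Y, ‖y‖ = 1 → ∃ x : X, ‖x‖ = 1 ∧ Δ x = y)
    (hiso : ∀ x y : X, ‖x‖ = 1 → ‖y‖ = 1 → ‖Δ x - Δ y‖ = ‖x - y‖)
    {C : Set X} (hCs : C ⊆ {x : X | ‖x‖ = 1}) (hCc : Convex ℝ C) :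
    convexHull ℝ (Δ '' C) ⊆ {y : Y | ‖y‖ = 1} := by
  intro y hy
  rw [convexHull_eq] at hy
  obtain ⟨ι, tf, w, z, hw0, hw1, hzs, hyeq⟩ := hy
  have htfne : tf.Nonempty := by
    rcases Finset.eq_empty_or_nonempty tf with h | h
    · rw [h, Finset.sum_empty] at hw1; norm_num at hw1
    · exact h
  obtain ⟨i0, hi0⟩ := htfne
  obtain ⟨x0, hx0C, _⟩ := hzs i0 hi0
  haveI : Nonempty X := ⟨x0⟩
  have hch : ∀ i, ∃ g : X, i ∈ tf → g ∈ C ∧ Δ g = z i := by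
    intro i
    by_cases hi : i ∈ tf
    · obtain ⟨g, hg, hgz⟩ := hzs i hi
      exact ⟨g, fun _ => ⟨hg, hgz⟩⟩
    · exact ⟨x0, fun h => absurd h hi⟩
  choose g hg using hch
  have hgC : ∀ i ∈ tf, g i ∈ C := fun i hi => (hg i hi).1
  have hgz : ∀ i ∈ tf, Δ (g i) = z i := fun i hi => (hg i hi).2
  have hcC : ∑ i ∈ tf, w i • g i ∈ C := hCc.sum_mem hw0 hw1 hgC
  have hnorm := image_combo_norm Δ hmap hsurj hiso tf w g hw0 hw1
    (fun i hi => hCs (hgC i hi)) (hCs hcC)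
  have hyval : y = ∑ i ∈ tf, w i • Δ (g i) := by
    rw [← hyeq, Finset.centerMass_eq_of_sum_1 _ _ hw1]
    apply Finset.sum_congr rfl
    intro i hi
    rw [hgz i hi]
  rw [mem_setOf_eq, hyval]
  exact hnorm

end Stmt9Aux

open Stmt9Aux Set Pointwise in
/-- A surjective isometry `Δ` between the unit spheres of two real Banach spaces maps
`-x` to a point of the unit sphere for any `x` in the sphere, and maps each maximal
convex subset of `S(X)` onto a maximal convex subset of `S(Y)`. -/
theorem stmt9 {X Y : Type*} [NormedAddCommGroup X] [NormedSpace ℝ X] [CompleteSpace X]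
    [NormedAddCommGroup Y] [NormedSpace ℝ Y] [CompleteSpace Y]
    (Δ : X → Y)
    (hmap : ∀ x : X, ‖x‖ = 1 → ‖Δ x‖ = 1)
    (hsurj : ∀ y : Y, ‖y‖ = 1 → ∃ x : X, ‖x‖ = 1 ∧ Δ x = y)
    (hiso : ∀ x y : X, ‖x‖ = 1 → ‖y‖ = 1 → ‖Δ x - Δ y‖ = ‖x - y‖) :
    (∀ x : X, ‖x‖ = 1 → ‖Δ (-x)‖ = 1) ∧
    (∀ F : Set X, F ⊆ {x : X | ‖x‖ = 1} → Convex ℝ F →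
      (∀ G : Set X, G ⊆ {x : X | ‖x‖ = 1} → Convex ℝ G → F ⊆ G → F = G) →
      (Δ '' F ⊆ {y : Y | ‖y‖ = 1} ∧ Convex ℝ (Δ '' F) ∧
        ∀ G : Set Y, G ⊆ {y : Y | ‖y‖ = 1} → Convex ℝ G → Δ '' F ⊆ G → Δ '' F = G)) := by
  constructor
  · intro x hx
    exact hmap (-x) (by rw [norm_neg, hx])
  · intro F hFs hFc hFmax
    -- negative face data
    have hFns : -F ⊆ {x : X | ‖x‖ = 1} := neg_subset_sphere hFs
    have hFnc : Convex ℝ (-F) := hFc.neg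
    have hFnmax := max_neg hFs hFc hFmax
    -- maximal convex sets containing the image hulls
    obtain ⟨G, hGin, hGs, hGc, hGmax⟩ :=
      exists_maximal_convex (hull_image_subset Δ hmap hsurj hiso hFs hFc)
        (convex_convexHull ℝ _)
    obtain ⟨H, hHin, hHs, hHc, hHmax⟩ :=
      exists_maximal_convex (hull_image_subset Δ hmap hsurj hiso hFns hFnc)
        (convex_convexHull ℝ _)
    have hFG : Δ '' F ⊆ G := (subset_convexHull ℝ _).trans hGin
    have hFnH : Δ '' (-F) ⊆ H := (subset_convexHull ℝ _).trans hHin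
    -- step 1 : -G ⊆ H
    have polF : pol F = -F := pol_eq_neg_of_max hFs hFc hFmax
    have polFn : pol (-F) = F := by
      rw [pol_eq_neg_of_max hFns hFnc hFnmax, neg_neg]
    have step1 : -G ⊆ H := by
      have e1 : pol G ⊆ pol (Δ '' F) := pol_anti hFG
      rw [pol_eq_neg_of_max hGs hGc hGmax] at e1
      have e2 : pol (Δ '' F) = Δ '' (-F) := by
        rw [← pol_image Δ hmap hsurj hiso hFs, polF]
      rw [e2] at e1
      exact e1.trans hFnH
    -- step 2 : -G = H
    have hGns : -G ⊆ {x : Y | ‖x‖ = 1} := neg_subset_sphere hGs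
    have hGnc : Convex ℝ (-G) := hGc.neg
    have hGnmax := max_neg hGs hGc hGmax
    have step2 : -G = H := hGnmax H hHs hHc step1
    -- step 3 : G ⊆ Δ '' F
    have step3 : G ⊆ Δ '' F := by
      have e4 : Δ '' (-F) ⊆ -G := by rw [step2]; exact hFnH
      have e5 : pol (-G) ⊆ pol (Δ '' (-F)) := pol_anti e4
      have e6 : pol (-G) = G := by
        rw [pol_eq_neg_of_max hGns hGnc hGnmax, neg_neg]
      have e7 : pol (Δ '' (-F)) = Δ '' F := by
        rw [← pol_image Δ hmap hsurj hiso hFns, polFn]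
      rw [e6, e7] at e5
      exact e5
    have hEq : Δ '' F = G := Subset.antisymm hFG step3
    refine ⟨?_, ?_, ?_⟩
    · rintro y ⟨x, hx, rfl⟩
      exact hmap x (hFs hx)
    · rw [hEq]; exact hGc
    · intro G' hG's hG'c hsub
      rw [hEq] at hsub ⊢
      exact hGmax G' hG's hG'c hsub
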